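/- Let a_1, a_2, b_1, b_2, c_1, c_2 ∈ ℝ and set A = a_1² + b_1², B = a_1a_2 + b_1b_2, C = a_2² + b_2². Assume c_1 ≠ 0, (a_1c_2 − a_2c_1, b_1c_2 − b_2c_1) ≠ (0,0), and A·c_2 − B·c_1 ≠ 0. Define g(α) = ((a_1α + a_2)² + (b_1α + b_2)²)/(c_1α + c_2)² on the domain {α ∈ ℝ : c_1α + c_2 ≠ 0}, and let α* = (C·c_1 − B·c_2)/(A·c_2 − B·c_1). Then c_1α* + c_2 ≠ 0, g(α*) ≤ g(α) for every α in the domain, and α* is a root of the quadratic (A·c_1c_2 − B·c_1²)·α² + (A·c_2² − C·c_1²)·α + (B·c_2² − C·c_1c_2) = 0, whose leading coefficient is nonzero and whose discriminant Δ = (A·c_2² − C·c_1²)² − 4(A·c_1c_2 − B·c_1²)(B·c_2² − C·c_1c_2) is nonnegative; hence α* equals [(C·c_1² − A·c_2²) + √Δ]/[2(A·c_1c_2 − B·c_1²)] or [(C·c_1² − A·c_2²) − √Δ]/[2(A·c_1c_2 − B·c_1²)]. -/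

import Mathlib

noncomputable section

/-- the per-image one-dimensional minimization at the core of
Proposition 3: `α* = (C·c₁ − B·c₂)/(A·c₂ − B·c₁)` globally minimizes
`g(α) = ((a₁α+a₂)² + (b₁α+b₂)²)/(c₁α+c₂)²` and is a root of the stated quadratic,
whose discriminant is nonnegative, so `α*` is given by the quadratic formula. -/
theorem stmt12 (a1 a2 b1 b2 c1 c2 : ℝ)
    (A B C : ℝ) (hA : A = a1^2 + b1^2) (hB : B = a1*a2 + b1*b2) (hC : C = a2^2 + b2^2)
    (hc1 : c1 ≠ 0)
    (hnz : (a1*c2 - a2*c1, b1*c2 - b2*c1) ≠ ((0 : ℝ), (0 : ℝ)))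
    (hAB : A*c2 - B*c1 ≠ 0)
    (g : ℝ → ℝ) (hg : ∀ α, g α = ((a1*α + a2)^2 + (b1*α + b2)^2) / (c1*α + c2)^2)
    (αs : ℝ) (hαs : αs = (C*c1 - B*c2) / (A*c2 - B*c1))
    (Δ : ℝ)
    (hΔ : Δ = (A*c2^2 - C*c1^2)^2 - 4*(A*c1*c2 - B*c1^2)*(B*c2^2 - C*c1*c2)) :
    c1*αs + c2 ≠ 0 ∧
    (∀ α, c1*α + c2 ≠ 0 → g αs ≤ g α) ∧
    (A*c1*c2 - B*c1^2)*αs^2 + (A*c2^2 - C*c1^2)*αs + (B*c2^2 - C*c1*c2) = 0 ∧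
    A*c1*c2 - B*c1^2 ≠ 0 ∧
    0 ≤ Δ ∧
    (αs = ((C*c1^2 - A*c2^2) + Real.sqrt Δ) / (2*(A*c1*c2 - B*c1^2)) ∨
     αs = ((C*c1^2 - A*c2^2) - Real.sqrt Δ) / (2*(A*c1*c2 - B*c1^2))) := by
  set u := a1*c2 - a2*c1 with hu
  set v := b1*c2 - b2*c1 with hv
  have huv : u ≠ 0 ∨ v ≠ 0 := by
    by_contra h
    push_neg at h
    exact hnz (by simp [h.1, h.2])
  have hS : 0 < u^2 + v^2 := by
    rcases huv with h | h
    · positivity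
    · positivity
  have hSid : u^2 + v^2 = A*c2^2 - 2*B*c1*c2 + C*c1^2 := by
    subst hA hB hC; simp only [hu, hv]; ring
  -- key polynomial identity
  have key : ∀ α : ℝ, ((a1*α + a2)^2 + (b1*α + b2)^2)*(u^2 + v^2) -
      (A*C - B^2)*(c1*α + c2)^2 =
      ((A*c2 - B*c1)*α - (C*c1 - B*c2))^2 := by
    intro α
    subst hA hB hC; simp only [hu, hv]; ring
  -- the value of the denominator at the minimizer
  have hden : c1*αs + c2 = (u^2 + v^2)/(A*c2 - B*c1) := by
    rw [hαs, hSid, eq_div_iff hAB, add_mul, mul_assoc, div_mul_cancel₀ _ hAB]; ring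
  have h1 : c1*αs + c2 ≠ 0 := by
    rw [hden]
    exact div_ne_zero (ne_of_gt hS) hAB
  -- value of g at αs
  have hlin : (A*c2 - B*c1)*αs - (C*c1 - B*c2) = 0 := by
    rw [hαs]; field_simp; ring
  have keyαs := key αs
  rw [hlin] at keyαs
  norm_num at keyαs
  have hgαs : g αs = (A*C - B^2)/(u^2 + v^2) := by
    rw [hg]
    rw [div_eq_div_iff (by positivity) hS.ne']
    linarith [keyαs]
  -- the quadratic root fact
  have hroot : (A*c1*c2 - B*c1^2)*αs^2 + (A*c2^2 - C*c1^2)*αs + (B*c2^2 - C*c1*c2) = 0 := by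
    linear_combination (c1*αs + c2) * hlin
  have hlead : A*c1*c2 - B*c1^2 ≠ 0 := by
    have h : A*c1*c2 - B*c1^2 = c1*(A*c2 - B*c1) := by ring
    rw [h]; exact mul_ne_zero hc1 hAB
  have hΔsq : Δ = (2*(A*c1*c2 - B*c1^2)*αs + (A*c2^2 - C*c1^2))^2 := by
    linear_combination hΔ - 4*(A*c1*c2 - B*c1^2)*hroot
  have hΔnn : 0 ≤ Δ := hΔsq ▸ sq_nonneg _
  refine ⟨h1, ?_, hroot, hlead, hΔnn, ?_⟩
  · intro α hα
    rw [hg α, hgαs]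
    rw [div_le_div_iff₀ hS (by positivity)]
    have h2 := key α
    have h3 := sq_nonneg ((A*c2 - B*c1)*α - (C*c1 - B*c2))
    linarith
  · have hsqrt : Real.sqrt Δ = |2*(A*c1*c2 - B*c1^2)*αs + (A*c2^2 - C*c1^2)| := by
      rw [hΔsq, Real.sqrt_sq_eq_abs]
    rcases abs_cases (2*(A*c1*c2 - B*c1^2)*αs + (A*c2^2 - C*c1^2)) with ⟨h, _⟩ | ⟨h, _⟩
    · left
      rw [hsqrt, h]
      rw [eq_div_iff (mul_ne_zero two_ne_zero hlead)]
      ring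
    · right
      rw [hsqrt, h]
      rw [eq_div_iff (mul_ne_zero two_ne_zero hlead)]
      ring
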